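/- arXiv:1606.00534 — 2 statements merged into one kernel-verified Lean document; each statement's English description precedes it below -/
import Mathlib

section
/- Let M ≥ 1 and N ≥ 1 be integers and let X_1, …, X_N be independent random variables, each uniformly distributed on {1, …, M}. For every k ∈ {1, …, M}, the conditional probability that the minimum min_i X_i is attained by a unique index, given that min_i X_i = k, equals N·(M − k)^{N−1}/((M − k + 1)^N − (M − k)^N). -/
open MeasureTheory ProbabilityTheory
open scoped ENNReal

/-- Conditional probability of a collision-free contention given that the first occupied
mini-slot is `k`: if `X 1, …, X N` are independent and each uniformly distributed on
`{1, …, M}`, then for `k ∈ {1, …, M}`, the conditional probability that the minimum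
`min_i X_i` is attained by a unique index, given `min_i X_i = k`, equals
`N (M - k)^{N-1} / ((M - k + 1)^N - (M - k)^N)`. -/
theorem stmt_10 {Ω : Type*} [MeasurableSpace Ω] (μ : Measure Ω) [IsProbabilityMeasure μ]
    (M N : ℕ) (hM : 1 ≤ M) (hN : 1 ≤ N)
    (X : Fin N → Ω → ℕ)
    (hmeas : ∀ i, Measurable (X i))
    (hunif : ∀ i, μ.map (X i) =
      (PMF.uniformOfFinset (Finset.Icc 1 M) (Finset.nonempty_Icc.mpr hM)).toMeasure)
    (hindep : iIndepFun X μ)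
    (k : ℕ) (hk1 : 1 ≤ k) (hkM : k ≤ M) :
    ProbabilityTheory.cond μ
        {ω | Finset.univ.inf' ⟨⟨0, hN⟩, Finset.mem_univ _⟩ (fun i => X i ω) = k}
        {ω | ∃! i, X i ω = Finset.univ.inf' ⟨⟨0, hN⟩, Finset.mem_univ _⟩ (fun j => X j ω)} =
      (N : ℝ≥0∞) * ((M - k : ℕ) : ℝ≥0∞) ^ (N - 1) /
        (((M - k + 1 : ℕ) : ℝ≥0∞) ^ N - ((M - k : ℕ) : ℝ≥0∞) ^ N) := by
  classical
  have hms : ∀ t : Set ℕ, MeasurableSet t := fun t => (Set.to_countable t).measurableSet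
  -- marginal law
  have hmarg : ∀ (i : Fin N) (t : Set ℕ),
      μ (X i ⁻¹' t) = ((((Finset.Icc 1 M).filter (· ∈ t)).card : ℝ≥0∞)) / (M : ℝ≥0∞) := by
    intro i t
    rw [← Measure.map_apply (hmeas i) (hms t), hunif i,
      PMF.toMeasure_uniformOfFinset_apply (Finset.nonempty_Icc.mpr hM) t (hms t), Nat.card_Icc]
    norm_num
  have hge : ∀ j : ℕ, 1 ≤ j → ∀ i : Fin N,
      μ (X i ⁻¹' Set.Ici j) = ((M + 1 - j : ℕ) : ℝ≥0∞) / (M : ℝ≥0∞) := by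
    intro j hj i
    rw [hmarg]
    congr 2
    simp only [Set.mem_Ici]
    have : (Finset.Icc 1 M).filter (fun x => j ≤ x) = Finset.Icc j M := by
      ext n; simp [Finset.mem_Icc]; omega
    rw [this, Nat.card_Icc]
  have heq : ∀ i : Fin N, μ (X i ⁻¹' ({k} : Set ℕ)) = 1 / (M : ℝ≥0∞) := by
    intro i
    rw [hmarg]
    congr 1
    simp only [Set.mem_singleton_iff]
    have : (Finset.Icc 1 M).filter (fun x => x = k) = {k} := by
      ext n; simp [Finset.mem_Icc]; omega
    rw [this, Finset.card_singleton, Nat.cast_one]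
  -- measure of ⋂ {X i ≥ j}
  have hInterGe : ∀ j : ℕ, 1 ≤ j →
      μ (⋂ i, X i ⁻¹' Set.Ici j) = (((M + 1 - j : ℕ) : ℝ≥0∞) / (M : ℝ≥0∞)) ^ N := by
    intro j hj
    rw [hindep.meas_iInter (fun i => ⟨Set.Ici j, hms _, rfl⟩)]
    simp [hge j hj, Finset.prod_const]
  set i0 : Fin N := ⟨0, hN⟩
  set A : Set Ω := {ω | Finset.univ.inf' ⟨i0, Finset.mem_univ _⟩ (fun i => X i ω) = k} with hA
  set B : Set Ω :=
    {ω | ∃! i, X i ω = Finset.univ.inf' ⟨i0, Finset.mem_univ _⟩ (fun j => X j ω)} with hB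
  have hAeq : A = (⋂ i, X i ⁻¹' Set.Ici k) \ (⋂ i, X i ⁻¹' Set.Ici (k + 1)) := by
    ext ω
    simp only [hA, Set.mem_setOf_eq, Set.mem_diff, Set.mem_iInter, Set.mem_preimage, Set.mem_Ici]
    constructor
    · intro h
      refine ⟨fun i => h ▸ Finset.inf'_le _ (Finset.mem_univ i), ?_⟩
      intro hall
      obtain ⟨i, -, hi⟩ := Finset.exists_mem_eq_inf' ⟨i0, Finset.mem_univ _⟩ (fun i => X i ω)
      rw [h] at hi
      have := hall i
      omega
    · rintro ⟨hge', hnot⟩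
      push_neg at hnot
      obtain ⟨i, hi⟩ := hnot
      refine le_antisymm (le_trans (Finset.inf'_le _ (Finset.mem_univ i)) (by omega)) ?_
      exact Finset.le_inf' _ _ fun j _ => hge' j
    -- done
  have hAmeas : MeasurableSet A := by
    rw [hAeq]
    exact (MeasurableSet.iInter fun i => (hmeas i) (hms _)).diff
      (MeasurableSet.iInter fun i => (hmeas i) (hms _))
  have hμA : μ A = (((M + 1 - k : ℕ) : ℝ≥0∞) / (M : ℝ≥0∞)) ^ N -
      (((M - k : ℕ) : ℝ≥0∞) / (M : ℝ≥0∞)) ^ N := by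
    rw [hAeq, measure_diff ?_ ?_ (measure_ne_top μ _)]
    · have h' : M + 1 - (k + 1) = M - k := by omega
      rw [hInterGe k hk1, hInterGe (k + 1) (by omega), h']
    · exact Set.iInter_mono fun i => Set.preimage_mono (Set.Ici_subset_Ici.mpr (by omega))
    · exact (MeasurableSet.iInter fun i => (hmeas i) (hms _)).nullMeasurableSet
  -- A ∩ B decomposition
  set C : Fin N → Set Ω :=
    fun i => ⋂ j, X j ⁻¹' (if j = i then ({k} : Set ℕ) else Set.Ici (k + 1)) with hC
  have hmemC : ∀ (i : Fin N) (ω : Ω),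
      ω ∈ C i ↔ X i ω = k ∧ ∀ j, j ≠ i → k + 1 ≤ X j ω := by
    intro i ω
    simp only [hC, Set.mem_iInter, Set.mem_preimage]
    constructor
    · intro h
      refine ⟨by simpa using h i, fun j hj => by simpa [hj] using h j⟩
    · rintro ⟨h1, h2⟩ j
      by_cases hj : j = i
      · subst hj; simpa using h1
      · simpa [hj] using h2 j hj
  have hABeq : A ∩ B = ⋃ i, C i := by
    ext ω
    simp only [Set.mem_inter_iff, hA, hB, Set.mem_setOf_eq, Set.mem_iUnion, hmemC]
    constructor
    · rintro ⟨hinf, i, hi, huniq⟩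
      refine ⟨i, by rw [hi, hinf], fun j hj => ?_⟩
      have hge' : k ≤ X j ω := hinf ▸ Finset.inf'_le _ (Finset.mem_univ j)
      have hne : X j ω ≠ k := fun h => hj (huniq j (show X j ω = _ by rw [h, hinf]))
      omega
    · rintro ⟨i, hik, hrest⟩
      have hinf : Finset.univ.inf' ⟨i0, Finset.mem_univ _⟩ (fun j => X j ω) = k := by
        refine le_antisymm (le_trans (Finset.inf'_le _ (Finset.mem_univ i)) (by omega)) ?_
        refine Finset.le_inf' _ _ fun j _ => ?_
        by_cases hj : j = i
        · subst hj; omega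
        · have := hrest j hj; omega
      refine ⟨hinf, i, show X i ω = _ by rw [hik, hinf], fun j hj => ?_⟩
      have hj' : X j ω = Finset.univ.inf' ⟨i0, Finset.mem_univ _⟩ (fun j => X j ω) := hj
      by_contra hji
      have := hrest j hji
      rw [hinf] at hj'
      omega
  have hCdisj : Pairwise (Function.onFun Disjoint C) := by
    intro i j hij
    refine Set.disjoint_left.mpr fun ω hi hj => ?_
    rw [hmemC] at hi hj
    have := hi.2 j (Ne.symm hij)
    have := hj.1
    omega
  have hCmeas : ∀ i, MeasurableSet (C i) :=
    fun i => MeasurableSet.iInter fun j => (hmeas j) (hms _)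
  have hμC : ∀ i, μ (C i) =
      (1 / (M : ℝ≥0∞)) * (((M - k : ℕ) : ℝ≥0∞) / (M : ℝ≥0∞)) ^ (N - 1) := by
    intro i
    rw [hC, hindep.meas_iInter (fun j => ⟨_, hms _, rfl⟩)]
    rw [← Finset.mul_prod_erase Finset.univ _ (Finset.mem_univ i)]
    have h1 : μ (X i ⁻¹' (if i = i then ({k} : Set ℕ) else Set.Ici (k + 1))) =
        1 / (M : ℝ≥0∞) := by rw [if_pos rfl]; exact heq i
    have h2 : ∀ j ∈ Finset.univ.erase i,
        μ (X j ⁻¹' (if j = i then ({k} : Set ℕ) else Set.Ici (k + 1))) =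
        ((M - k : ℕ) : ℝ≥0∞) / (M : ℝ≥0∞) := by
      intro j hj
      rw [if_neg (Finset.ne_of_mem_erase hj), hge (k + 1) (by omega)]
      congr 2
      omega
    rw [h1, Finset.prod_congr rfl h2, Finset.prod_const, Finset.card_erase_of_mem
      (Finset.mem_univ i), Finset.card_univ, Fintype.card_fin]
  have hμAB : μ (A ∩ B) =
      (N : ℝ≥0∞) * ((1 / (M : ℝ≥0∞)) * (((M - k : ℕ) : ℝ≥0∞) / (M : ℝ≥0∞)) ^ (N - 1)) := by
    rw [hABeq, measure_iUnion hCdisj hCmeas]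
    simp [hμC, tsum_fintype]
  -- final arithmetic
  rw [cond_apply hAmeas, hμA, hμAB]
  set m : ℝ≥0∞ := (M : ℝ≥0∞) with hm
  have hm0 : m ≠ 0 := by simp [hm]; omega
  have hmtop : m ≠ ∞ := by simp [hm]
  set a : ℝ≥0∞ := ((M - k + 1 : ℕ) : ℝ≥0∞) with ha
  set b : ℝ≥0∞ := ((M - k : ℕ) : ℝ≥0∞) with hb
  have hba : (M - k : ℕ) ^ N < (M - k + 1 : ℕ) ^ N :=
    Nat.pow_lt_pow_left (by omega) (by omega)
  have hMk : ((M + 1 - k : ℕ) : ℝ≥0∞) = a := by rw [ha]; congr 1; omega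
  have hT0 : a ^ N - b ^ N ≠ 0 := by
    rw [ha, hb, ← Nat.cast_pow, ← Nat.cast_pow, ← ENNReal.natCast_sub]
    exact Nat.cast_ne_zero.mpr (Nat.sub_ne_zero_of_lt hba)
  have hTtop : a ^ N - b ^ N ≠ ∞ := by
    exact ne_top_of_le_ne_top (by simp [ha]) tsub_le_self
  have hc0 : (m ^ N)⁻¹ ≠ 0 := by simp [hmtop]
  have hctop : (m ^ N)⁻¹ ≠ ∞ := ENNReal.inv_ne_top.mpr (pow_ne_zero N hm0)
  have hpow : ∀ x : ℝ≥0∞, (x / m) ^ N = x ^ N * (m ^ N)⁻¹ := by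
    intro x
    rw [div_eq_mul_inv, mul_pow, ENNReal.inv_pow]
  have hsub : (a / m) ^ N - (b / m) ^ N = (a ^ N - b ^ N) * (m ^ N)⁻¹ := by
    rw [hpow, hpow, ENNReal.sub_mul]
    intro _ _
    exact hctop
  have hm1 : (1 / m) * (b / m) ^ (N - 1) = b ^ (N - 1) * (m ^ N)⁻¹ := by
    have hsplit : m⁻¹ ^ (N - 1) * m⁻¹ = (m ^ N)⁻¹ := by
      rw [← pow_succ, ENNReal.inv_pow]; congr 1; omega
    rw [one_div, div_eq_mul_inv, mul_pow, ← hsplit]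
    ring
  rw [hMk, hsub, hm1]
  rw [ENNReal.mul_inv (Or.inl hT0) (Or.inl hTtop)]
  calc ((a ^ N - b ^ N)⁻¹ * (m ^ N)⁻¹⁻¹) * ((N : ℝ≥0∞) * (b ^ (N - 1) * (m ^ N)⁻¹))
      = ((N : ℝ≥0∞) * b ^ (N - 1) * (a ^ N - b ^ N)⁻¹) * ((m ^ N)⁻¹⁻¹ * (m ^ N)⁻¹) := by ring
    _ = (N : ℝ≥0∞) * b ^ (N - 1) * (a ^ N - b ^ N)⁻¹ := by
        rw [ENNReal.inv_mul_cancel hc0 hctop, mul_one]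
    _ = (N : ℝ≥0∞) * b ^ (N - 1) / (a ^ N - b ^ N) := by rw [div_eq_mul_inv]
end

section
/- For integers M ≥ 1, N ≥ 1 and k ∈ {1, …, M}, define P_k = N·(M − k)^{N−1}/((M − k + 1)^N − (M − k)^N). Then the sequence (P_k)_{k=1}^M is monotonically decreasing: P_{k+1} ≤ P_k for all 1 ≤ k ≤ M − 1. -/
lemma stmt_11_key (a : ℝ) (ha : 0 ≤ a) (n : ℕ) :
    a ^ n * ((a + 2) ^ (n + 1) - (a + 1) ^ (n + 1)) ≤
      (a + 1) ^ n * ((a + 1) ^ (n + 1) - a ^ (n + 1)) := by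
  have h1 : (a + 2) ^ (n + 1) - (a + 1) ^ (n + 1)
      = ∑ i ∈ Finset.range (n + 1), (a + 2) ^ i * (a + 1) ^ (n - i) := by
    have h := geom_sum₂_mul (a + 2) (a + 1) (n + 1)
    rw [show a + 2 - (a + 1) = (1:ℝ) by ring, mul_one] at h
    rw [← h]
    simp
  have h2 : (a + 1) ^ (n + 1) - a ^ (n + 1)
      = ∑ i ∈ Finset.range (n + 1), (a + 1) ^ i * a ^ (n - i) := by
    have h := geom_sum₂_mul (a + 1) a (n + 1)
    rw [show a + 1 - a = (1:ℝ) by ring, mul_one] at h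
    rw [← h]
    simp
  rw [h1, h2, Finset.mul_sum, Finset.mul_sum]
  apply Finset.sum_le_sum
  intro i hi
  have hin : i ≤ n := Nat.lt_succ_iff.mp (Finset.mem_range.mp hi)
  have e1 : a ^ n = a ^ (n - i) * a ^ i := by rw [← pow_add]; congr 1; omega
  have e2 : (a + 1) ^ n = (a + 1) ^ (n - i) * (a + 1) ^ i := by
    rw [← pow_add]; congr 1; omega
  rw [e1, e2]
  have hkey : a ^ i * (a + 2) ^ i ≤ (a + 1) ^ i * (a + 1) ^ i := by
    rw [← mul_pow, ← mul_pow]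
    apply pow_le_pow_left₀ (by positivity) (by nlinarith)
  calc a ^ (n - i) * a ^ i * ((a + 2) ^ i * (a + 1) ^ (n - i))
      = (a ^ (n - i) * (a + 1) ^ (n - i)) * (a ^ i * (a + 2) ^ i) := by ring
    _ ≤ (a ^ (n - i) * (a + 1) ^ (n - i)) * ((a + 1) ^ i * (a + 1) ^ i) :=
        mul_le_mul_of_nonneg_left hkey (by positivity)
    _ = (a + 1) ^ (n - i) * (a + 1) ^ i * ((a + 1) ^ i * a ^ (n - i)) := by ring

/-- Monotonicity part of Lemma 5: the sequence
`P_k = N (M - k)^{N-1} / ((M - k + 1)^N - (M - k)^N)`, `k = 1, …, M`,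
is monotonically decreasing. -/
theorem stmt_11 (M N : ℕ) (hM : 1 ≤ M) (hN : 1 ≤ N) :
    ∀ k : ℕ, 1 ≤ k → k + 1 ≤ M →
      (N : ℝ) * ((M : ℝ) - ((k : ℝ) + 1)) ^ (N - 1) /
          (((M : ℝ) - ((k : ℝ) + 1) + 1) ^ N - ((M : ℝ) - ((k : ℝ) + 1)) ^ N) ≤
        (N : ℝ) * ((M : ℝ) - (k : ℝ)) ^ (N - 1) /
          (((M : ℝ) - (k : ℝ) + 1) ^ N - ((M : ℝ) - (k : ℝ)) ^ N) := by
  intro k hk1 hk2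
  obtain ⟨n, rfl⟩ : ∃ n, N = n + 1 := ⟨N - 1, by omega⟩
  set a : ℝ := (M : ℝ) - ((k : ℝ) + 1) with ha_def
  have hcast : (k : ℝ) + 1 ≤ (M : ℝ) := by exact_mod_cast hk2
  have ha : 0 ≤ a := by simp [ha_def]; linarith
  have e1 : (M : ℝ) - (k : ℝ) = a + 1 := by simp [ha_def]; ring
  have e2 : (M : ℝ) - (k : ℝ) + 1 = a + 2 := by rw [e1]; ring
  have e3 : a + 1 + 1 = a + 2 := by ring
  rw [e1]
  simp only [e3]
  simp only [Nat.add_sub_cancel, e3]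
  have hd1 : 0 < (a + 1) ^ (n + 1) - a ^ (n + 1) := by
    have := pow_lt_pow_left₀ (show a < a + 1 by linarith) ha (by omega : n + 1 ≠ 0)
    linarith
  have hd2 : 0 < (a + 2) ^ (n + 1) - (a + 1) ^ (n + 1) := by
    have := pow_lt_pow_left₀ (show a + 1 < a + 2 by linarith) (by linarith) (by omega : n + 1 ≠ 0)
    linarith
  rw [div_le_div_iff₀ hd1 hd2]
  have hkey := stmt_11_key a ha n
  have hNn : (0 : ℝ) ≤ ((n : ℝ) + 1) := by positivity
  calc ((n : ℕ) + 1 : ℕ) * a ^ n * ((a + 2) ^ (n + 1) - (a + 1) ^ (n + 1))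
      = ((n : ℝ) + 1) * (a ^ n * ((a + 2) ^ (n + 1) - (a + 1) ^ (n + 1))) := by
        push_cast; ring
    _ ≤ ((n : ℝ) + 1) * ((a + 1) ^ n * ((a + 1) ^ (n + 1) - a ^ (n + 1))) :=
        mul_le_mul_of_nonneg_left hkey hNn
    _ = ((n : ℕ) + 1 : ℕ) * (a + 1) ^ n * ((a + 1) ^ (n + 1) - a ^ (n + 1)) := by
        push_cast; ring
end
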